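/- Let x be a sequence of length n and let k ≤ n−1 be the position of the minimum value of x. Then |NG(x,k)| = 1 + #{ j | 1 ≤ j < k and PD⃖_x[j] = k − j }. (The quantity #{ j | 1 ≤ j < k and PD⃖_x[j] = k − j } is exactly the length of the right branch of the left subtree of the Cartesian tree of x.) -/

import Mathlib

/-- A sequence of length `n`: a function `ℕ → ℤ` injective on positions `1,…,n`. -/
def IsSeq (n : ℕ) (x : ℕ → ℤ) : Prop := Set.InjOn x (Set.Icc 1 n)

/-- Parent-distance table: `fwdPD x i = i - max{ j | 1 ≤ j < i, x j < x i }` if such `j`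
exists, `0` otherwise. -/
def fwdPD (x : ℕ → ℤ) (i : ℕ) : ℕ :=
  if h : ((Finset.Ico 1 i).filter (fun j => x j < x i)).Nonempty then
    i - ((Finset.Ico 1 i).filter (fun j => x j < x i)).max' h
  else 0

/-- Reverse parent-distance table: `revPD n x i = min{ j | i < j ≤ n, x j < x i } - i` if
such `j` exists, `0` otherwise. -/
def revPD (n : ℕ) (x : ℕ → ℤ) (i : ℕ) : ℕ :=
  if h : ((Finset.Ioc i n).filter (fun j => x j < x i)).Nonempty then
    ((Finset.Ioc i n).filter (fun j => x j < x i)).min' h - i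
  else 0

/-- The swap `τ(x,i)`: exchanges positions `i` and `i+1`. -/
def swapSeq (x : ℕ → ℤ) (i : ℕ) : ℕ → ℤ :=
  fun j => if j = i then x (i + 1) else if j = i + 1 then x i else x j

/-- The parent-distance table of a sequence of length `n`, as a function on `Fin n`
(position `k : Fin n` corresponds to index `k+1 ∈ {1,…,n}`). -/
def PDvec (n : ℕ) (x : ℕ → ℤ) : Fin n → ℕ := fun k => fwdPD x (k.1 + 1)

/-- `NGat n x i` is the set of parent-distance tables obtained by a swap at position `i`
(`1 ≤ i ≤ n-1`) from some sequence `z` having the same Cartesian tree (i.e. the same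
parent-distance table) as `x`; it is empty for `i` out of range. -/
def NGat (n : ℕ) (x : ℕ → ℤ) (i : ℕ) : Set (Fin n → ℕ) :=
  {P | 1 ≤ i ∧ i + 1 ≤ n ∧
    ∃ z, IsSeq n z ∧ PDvec n z = PDvec n x ∧ P = PDvec n (swapSeq z i)}

/-- The neighborhood of (the Cartesian tree of) `x` in the swap graph. -/
def NG (n : ℕ) (x : ℕ → ℤ) : Set (Fin n → ℕ) := ⋃ i, NGat n x i


namespace St14


def NS (x : ℕ → ℤ) (i : ℕ) : Finset ℕ := (Finset.Ico 1 i).filter (fun j => x j < x i)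

lemma fwdPD_eq_dite (x : ℕ → ℤ) (i : ℕ) :
    fwdPD x i = if h : (NS x i).Nonempty then i - (NS x i).max' h else 0 := rfl

lemma mem_NS {x : ℕ → ℤ} {i j : ℕ} : j ∈ NS x i ↔ (1 ≤ j ∧ j < i) ∧ x j < x i := by
  simp [NS, Finset.mem_filter, Finset.mem_Ico, and_assoc]

lemma fwdPD_of_empty {x : ℕ → ℤ} {i : ℕ} (h : ¬ (NS x i).Nonempty) : fwdPD x i = 0 := by
  rw [fwdPD_eq_dite]; simp [h]

lemma fwdPD_of_max {x : ℕ → ℤ} {i j : ℕ} (hj : j ∈ NS x i) (hm : ∀ m ∈ NS x i, m ≤ j) :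
    fwdPD x i = i - j := by
  have hne : (NS x i).Nonempty := ⟨j, hj⟩
  rw [fwdPD_eq_dite]
  rw [dif_pos hne]
  congr 1
  exact le_antisymm (Finset.max'_le _ hne _ hm) (Finset.le_max' _ j hj)

lemma NS_max'_mem {x : ℕ → ℤ} {i : ℕ} (h : (NS x i).Nonempty) : (NS x i).max' h ∈ NS x i :=
  Finset.max'_mem _ h

lemma fwdPD_ne_zero_iff {x : ℕ → ℤ} {i : ℕ} : fwdPD x i ≠ 0 ↔ (NS x i).Nonempty := by
  constructor
  · intro h
    by_contra he
    exact h (fwdPD_of_empty he)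
  · intro h
    have hm := NS_max'_mem h
    rw [mem_NS] at hm
    rw [fwdPD_eq_dite, dif_pos h]
    omega

lemma NS_max'_eq {x : ℕ → ℤ} {i : ℕ} (h : (NS x i).Nonempty) :
    (NS x i).max' h = i - fwdPD x i := by
  have hm := NS_max'_mem h
  rw [mem_NS] at hm
  rw [fwdPD_eq_dite, dif_pos h]
  omega

lemma fwdPD_congr {x z : ℕ → ℤ} {i : ℕ} (h : NS z i = NS x i) : fwdPD z i = fwdPD x i := by
  rw [fwdPD_eq_dite, fwdPD_eq_dite]
  by_cases hne : (NS x i).Nonempty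
  · rw [dif_pos (h ▸ hne), dif_pos hne]
    congr 1
    simp [h]
  · rw [dif_neg (h ▸ hne), dif_neg hne]

/-- visibility: j sees position K from the left (right spine of prefix [1,K-1]) -/
def Vis (x : ℕ → ℤ) (K j : ℕ) : Prop := ∀ m, j < m → m < K → x j < x m

lemma vis_succ (x : ℕ → ℤ) {K j : ℕ} (hj1 : 1 ≤ j) (hjK : j < K) :
    Vis x (K + 1) j ↔ Vis x K j ∧ fwdPD x K ≠ 0 ∧ j ≤ K - fwdPD x K := by
  constructor
  · intro hv
    have hvK : Vis x K j := fun m h1 h2 => hv m h1 (by omega)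
    have hxjK : x j < x K := hv K hjK (by omega)
    have hjmem : j ∈ NS x K := mem_NS.2 ⟨⟨hj1, hjK⟩, hxjK⟩
    have hne : (NS x K).Nonempty := ⟨j, hjmem⟩
    refine ⟨hvK, fwdPD_ne_zero_iff.2 hne, ?_⟩
    rw [← NS_max'_eq hne]
    exact Finset.le_max' _ j hjmem
  · rintro ⟨hvK, hne0, hle⟩
    have hne : (NS x K).Nonempty := fwdPD_ne_zero_iff.1 hne0
    have hle' : j ≤ (NS x K).max' hne := by rw [NS_max'_eq hne]; exact hle
    have hpmem := NS_max'_mem hne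
    rw [mem_NS] at hpmem
    have hxjK : x j < x K := by
      rcases eq_or_lt_of_le hle' with h | h
      · rw [h]; exact hpmem.2
      · exact lt_trans (hvK _ h hpmem.1.2) hpmem.2
    intro m h1 h2
    rcases Nat.lt_or_ge m K with hm | hm
    · exact hvK m h1 hm
    · have : m = K := by omega
      rw [this]; exact hxjK

lemma vis_transfer (x z : ℕ → ℤ) (K : ℕ)
    (hagree : ∀ i, 1 ≤ i → i < K → fwdPD z i = fwdPD x i) :
    ∀ j, 1 ≤ j → j < K → (Vis x K j ↔ Vis z K j) := by
  induction K with
  | zero => intro j h1 h2; omega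
  | succ K ih =>
    intro j hj1 hjK
    rcases Nat.lt_or_ge j K with hlt | hge
    · have hK1 : 1 ≤ K := by omega
      rw [vis_succ x hj1 hlt, vis_succ z hj1 hlt,
        ih (fun i h1 h2 => hagree i h1 (by omega)) j hj1 hlt,
        hagree K hK1 (by omega)]
    · have hj : j = K := by omega
      subst hj
      constructor <;> intro _ <;> intro m h1 h2 <;> omega

/-- min transfer: position of the minimum is determined by the table -/
lemma min_transfer {n k : ℕ} {x z : ℕ → ℤ}
    (hagree : ∀ i, 1 ≤ i → i ≤ n → fwdPD z i = fwdPD x i)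
    (hz : IsSeq n z) (hk1 : 1 ≤ k) (hkn : k ≤ n)
    (hmin : ∀ j, 1 ≤ j → j ≤ n → j ≠ k → x k < x j) :
    ∀ j, 1 ≤ j → j ≤ n → j ≠ k → z k < z j := by
  -- table facts about x
  have hx0 : fwdPD x k = 0 := by
    apply fwdPD_of_empty
    rintro ⟨j, hj⟩
    rw [mem_NS] at hj
    exact absurd (hmin j hj.1.1 (by omega) (by omega)) (not_lt.2 (le_of_lt hj.2))
  have hxT : ∀ i, k < i → i ≤ n → fwdPD x i ≠ 0 ∧ fwdPD x i ≤ i - k := by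
    intro i hki hin
    have hkmem : k ∈ NS x i := mem_NS.2 ⟨⟨hk1, hki⟩, hmin i (by omega) hin (by omega)⟩
    have hne : (NS x i).Nonempty := ⟨k, hkmem⟩
    refine ⟨fwdPD_ne_zero_iff.2 hne, ?_⟩
    have := Finset.le_max' _ k hkmem
    have h2 := NS_max'_eq hne
    have hm := NS_max'_mem hne
    rw [mem_NS] at hm
    omega
  -- now for z
  have hz0 : fwdPD z k = 0 := by rw [hagree k hk1 hkn]; exact hx0
  have hzT : ∀ i, k < i → i ≤ n → fwdPD z i ≠ 0 ∧ fwdPD z i ≤ i - k := by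
    intro i h1 h2; rw [hagree i (by omega) h2]; exact hxT i h1 h2
  -- z k < z i for i in (k, n] by strong induction
  have key : ∀ i, k < i → i ≤ n → z k < z i := by
    intro i
    induction i using Nat.strong_induction_on with
    | _ i ih =>
      intro hki hin
      obtain ⟨hne0, hle⟩ := hzT i hki hin
      have hne : (NS z i).Nonempty := fwdPD_ne_zero_iff.1 hne0
      have hm := NS_max'_mem hne
      rw [mem_NS] at hm
      have hkm : k ≤ (NS z i).max' hne := by
        have := NS_max'_eq hne
        omega
      rcases eq_or_lt_of_le hkm with h | h
      · rw [h]; exact hm.2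
      · exact lt_trans (ih _ hm.1.2 h (by omega)) hm.2
  intro j hj1 hjn hjk
  rcases Nat.lt_or_ge k j with h | h
  · exact key j h hjn
  · have hjk' : j < k := by omega
    have hnot : ¬ (z j < z k) := by
      intro hc
      have : j ∈ NS z k := mem_NS.2 ⟨⟨hj1, hjk'⟩, hc⟩
      have : (NS z k).Nonempty := ⟨j, this⟩
      exact (fwdPD_ne_zero_iff.2 this) hz0
    have hne : z k ≠ z j := fun h' =>
      hjk (hz ⟨hk1, hkn⟩ ⟨hj1, hjn⟩ h').symm
    rcases lt_trichotomy (z k) (z j) with h' | h' | h'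
    · exact h'
    · exact absurd h' hne
    · exact absurd h' hnot

lemma swapSeq_at (x : ℕ → ℤ) (i : ℕ) : swapSeq x i i = x (i+1) := by simp [swapSeq]

lemma swapSeq_at' (x : ℕ → ℤ) (i : ℕ) : swapSeq x i (i+1) = x i := by
  simp [swapSeq]

lemma swapSeq_other (x : ℕ → ℤ) {i j : ℕ} (h1 : j ≠ i) (h2 : j ≠ i + 1) :
    swapSeq x i j = x j := by simp [swapSeq, h1, h2]

lemma isSeq_swap {n k : ℕ} {z : ℕ → ℤ} (hz : IsSeq n z) (hk1 : 1 ≤ k) (hk2 : k + 1 ≤ n) :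
    IsSeq n (swapSeq z k) := by
  have hval : ∀ j, swapSeq z k j = z (Equiv.swap k (k+1) j) := by
    intro j
    rcases eq_or_ne j k with h | h
    · subst h; rw [swapSeq_at, Equiv.swap_apply_left]
    rcases eq_or_ne j (k+1) with h' | h'
    · subst h'; rw [swapSeq_at', Equiv.swap_apply_right]
    · rw [swapSeq_other z h h', Equiv.swap_apply_of_ne_of_ne h h']
  have hmem : ∀ j ∈ Set.Icc 1 n, Equiv.swap k (k+1) j ∈ Set.Icc 1 n := by
    intro j hj
    rcases eq_or_ne j k with h | h
    · subst h; rw [Equiv.swap_apply_left]; exact ⟨by omega, hk2⟩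
    rcases eq_or_ne j (k+1) with h' | h'
    · subst h'; rw [Equiv.swap_apply_right]; exact ⟨hk1, by omega⟩
    · rw [Equiv.swap_apply_of_ne_of_ne h h']; exact hj
  intro a ha b hb hab
  rw [hval, hval] at hab
  have := hz (hmem a ha) (hmem b hb) hab
  exact (Equiv.swap k (k+1)).injective this

section SwapComp

variable {n k : ℕ} {z : ℕ → ℤ}

lemma NS_swap_lt {i : ℕ} (hi : i < k) :
    NS (swapSeq z k) i = NS z i := by
  unfold NS
  apply Finset.filter_congr
  intro j hj
  rw [Finset.mem_Ico] at hj
  rw [swapSeq_other z (show i ≠ k by omega) (by omega),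
    swapSeq_other z (show j ≠ k by omega) (by omega)]

lemma fwdPD_swap_succ (hz : IsSeq n z) (hk1 : 1 ≤ k) (hk2 : k + 1 ≤ n)
    (hzmin : ∀ j, 1 ≤ j → j ≤ n → j ≠ k → z k < z j) :
    fwdPD (swapSeq z k) (k + 1) = 0 := by
  apply fwdPD_of_empty
  rintro ⟨j, hj⟩
  rw [mem_NS] at hj
  obtain ⟨⟨hj1, hjk⟩, hlt⟩ := hj
  rw [swapSeq_at'] at hlt
  rcases eq_or_ne j k with h | h
  · rw [h, swapSeq_at] at hlt
    exact absurd hlt (not_lt.2 (le_of_lt (hzmin (k+1) (by omega) hk2 (by omega))))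
  · rw [swapSeq_other z h (by omega)] at hlt
    exact absurd hlt (not_lt.2 (le_of_lt (hzmin j hj1 (by omega) h)))

lemma NS_swap_at :
    NS (swapSeq z k) k = (Finset.Ico 1 k).filter (fun j => z j < z (k + 1)) := by
  unfold NS
  apply Finset.filter_congr
  intro j hj
  rw [Finset.mem_Ico] at hj
  rw [swapSeq_at, swapSeq_other z (show j ≠ k by omega) (by omega)]

lemma fwdPD_swap_big (hz : IsSeq n z) (hk1 : 1 ≤ k) (hk2 : k + 1 ≤ n)
    (hzmin : ∀ j, 1 ≤ j → j ≤ n → j ≠ k → z k < z j)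
    {i : ℕ} (hi : k + 2 ≤ i) (hin : i ≤ n) :
    fwdPD (swapSeq z k) i = if fwdPD z i = i - k then i - (k+1) else fwdPD z i := by
  set y := swapSeq z k with hy
  have hyi : y i = z i := swapSeq_other z (by omega) (by omega)
  have hkmem : k ∈ NS z i := mem_NS.2 ⟨⟨hk1, by omega⟩, hzmin i (by omega) hin (by omega)⟩
  have hne : (NS z i).Nonempty := ⟨k, hkmem⟩
  set p := (NS z i).max' hne with hp
  have hpmem : p ∈ NS z i := NS_max'_mem hne
  rw [mem_NS] at hpmem
  have hpk : k ≤ p := Finset.le_max' _ k hkmem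
  have hfz : fwdPD z i = i - p := by
    rw [fwdPD_eq_dite, dif_pos hne]
  have hk1mem : k + 1 ∈ NS y i := by
    rw [mem_NS]
    refine ⟨⟨by omega, by omega⟩, ?_⟩
    rw [hyi, hy, swapSeq_at']
    exact hzmin i (by omega) hin (by omega)
  rcases Nat.lt_or_ge p (k + 2) with hple | hpge
  · -- p = k or p = k+1 : new max is k+1
    have hmax : ∀ m ∈ NS y i, m ≤ k + 1 := by
      intro m hm
      rw [mem_NS] at hm
      by_contra hc
      have hm2 : k + 2 ≤ m := by omega
      have : y m = z m := swapSeq_other z (by omega) (by omega)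
      rw [this, hyi] at hm
      have : m ∈ NS z i := mem_NS.2 ⟨⟨by omega, hm.1.2⟩, hm.2⟩
      have := Finset.le_max' _ m this
      omega
    have hres : fwdPD y i = i - (k + 1) := fwdPD_of_max hk1mem hmax
    rcases eq_or_lt_of_le hpk with h | h
    · rw [if_pos (by omega), hres]
    · have hp1 : p = k + 1 := by omega
      rw [if_neg (by omega), hres]
      omega
  · -- p ≥ k+2 : max unchanged
    have hpmem' : p ∈ NS y i := by
      rw [mem_NS]
      refine ⟨hpmem.1, ?_⟩
      rw [hyi, hy, swapSeq_other z (by omega) (by omega)]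
      exact hpmem.2
    have hmax : ∀ m ∈ NS y i, m ≤ p := by
      intro m hm
      rw [mem_NS] at hm
      by_contra hc
      have hm2 : k + 2 ≤ m := by omega
      have : y m = z m := swapSeq_other z (by omega) (by omega)
      rw [this, hyi] at hm
      have : m ∈ NS z i := mem_NS.2 ⟨⟨by omega, hm.1.2⟩, hm.2⟩
      have := Finset.le_max' _ m this
      omega
    rw [if_neg (by omega), fwdPD_of_max hpmem' hmax, hfz]

end SwapComp

section RevVis

variable {n k : ℕ} {x : ℕ → ℤ}

/-- auxiliary set for revPD -/
def RS (n : ℕ) (x : ℕ → ℤ) (i : ℕ) : Finset ℕ := (Finset.Ioc i n).filter (fun j => x j < x i)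

lemma revPD_eq_dite (n : ℕ) (x : ℕ → ℤ) (i : ℕ) :
    revPD n x i = if h : (RS n x i).Nonempty then (RS n x i).min' h - i else 0 := rfl

lemma mem_RS {i j : ℕ} : j ∈ RS n x i ↔ (i < j ∧ j ≤ n) ∧ x j < x i := by
  simp [RS, Finset.mem_filter, Finset.mem_Ioc, and_assoc]

lemma vis_to_revPD (hmin : ∀ j, 1 ≤ j → j ≤ n → j ≠ k → x k < x j)
    (hk1 : 1 ≤ k) (hkn : k ≤ n) {j : ℕ} (hj1 : 1 ≤ j) (hjk : j < k)
    (hv : Vis x k j) : revPD n x j = k - j := by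
  have hkmem : k ∈ RS n x j := mem_RS.2 ⟨⟨hjk, hkn⟩, by
    exact lt_of_not_ge (fun h => absurd (hmin j hj1 (by omega) (by omega)) (not_lt.2 h))⟩
  have hne : (RS n x j).Nonempty := ⟨k, hkmem⟩
  have hminEq : (RS n x j).min' hne = k := by
    refine le_antisymm (Finset.min'_le _ k hkmem) ?_
    apply Finset.le_min'
    intro m hm
    rw [mem_RS] at hm
    by_contra hc
    exact absurd (hv m hm.1.1 (by omega)) (not_lt.2 (le_of_lt hm.2))
  rw [revPD_eq_dite, dif_pos hne, hminEq]

lemma revPD_to_vis (hx : IsSeq n x) (hkn : k ≤ n) {j : ℕ} (hj1 : 1 ≤ j) (hjk : j < k)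
    (hjn : j ≤ n) (hr : revPD n x j = k - j) : Vis x k j := by
  have hne : (RS n x j).Nonempty := by
    by_contra hc
    rw [revPD_eq_dite, dif_neg hc] at hr
    omega
  rw [revPD_eq_dite, dif_pos hne] at hr
  have hmm := Finset.min'_mem _ hne
  rw [mem_RS] at hmm
  have hminEq : (RS n x j).min' hne = k := by omega
  intro m h1 h2
  have hmn : m ∉ RS n x j := by
    intro hc
    have := Finset.min'_le _ m hc
    omega
  rw [mem_RS] at hmn
  push_neg at hmn
  have hle := hmn ⟨h1, by omega⟩
  rcases lt_or_eq_of_le hle with h | h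
  · exact h
  · exact absurd (hx ⟨hj1, hjn⟩ ⟨by omega, by omega⟩ h) (by omega)

end RevVis

section Construct

variable {n k : ℕ} {x : ℕ → ℤ}

lemma construct (hx : IsSeq n x) (hk1 : 1 ≤ k) (hk2 : k + 1 ≤ n)
    (hmin : ∀ j, 1 ≤ j → j ≤ n → j ≠ k → x k < x j)
    (j' : ℕ) (hj' : j' = 0 ∨ (1 ≤ j' ∧ j' < k ∧ Vis x k j')) :
    ∃ z, IsSeq n z ∧ (∀ i, 1 ≤ i → i ≤ n → fwdPD z i = fwdPD x i) ∧
      fwdPD (swapSeq z k) k = (if j' = 0 then 0 else k - j') ∧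
      (∀ j, 1 ≤ j → j ≤ n → j ≠ k → z k < z j) := by
  set M : ℤ := (n : ℤ) + 2 with hM
  have hM0 : (0:ℤ) < M := by positivity
  set c : ℤ := if j' = 0 then x k - 1 else x j' with hc
  have hcx : x k - 1 ≤ c := by
    rcases hj' with h | ⟨h1, h2, h3⟩
    · simp [hc, h]
    · rw [hc, if_neg (by omega)]
      have := hmin j' h1 (by omega) (by omega)
      omega
  set r : ℕ → ℕ := fun i => ((Finset.Icc (k+1) n).filter (fun m => x m ≤ x i)).card with hr
  have hrlow : ∀ i, k + 1 ≤ i → i ≤ n → 1 ≤ r i := by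
    intro i h1 h2
    apply Finset.card_pos.2
    exact ⟨i, Finset.mem_filter.2 ⟨Finset.mem_Icc.2 ⟨h1, h2⟩, le_refl _⟩⟩
  have hrhigh : ∀ i, (r i : ℤ) < M := by
    intro i
    have h1 : r i ≤ (Finset.Icc (k+1) n).card := Finset.card_filter_le _ _
    have h2 : (Finset.Icc (k+1) n).card = n - k := by
      rw [Nat.card_Icc]; omega
    have : r i ≤ n := by omega
    rw [hM]
    exact_mod_cast by omega
  have hrmono : ∀ a b, k + 1 ≤ a → a ≤ n → k + 1 ≤ b → b ≤ n → x a < x b → r a < r b := by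
    intro a b ha1 ha2 hb1 hb2 hab
    apply Finset.card_lt_card
    rw [Finset.ssubset_iff_of_subset]
    · exact ⟨b, Finset.mem_filter.2 ⟨Finset.mem_Icc.2 ⟨hb1, hb2⟩, le_refl _⟩,
        fun hb => absurd (Finset.mem_filter.1 hb).2 (not_le.2 hab)⟩
    · intro m hm
      rw [Finset.mem_filter] at hm ⊢
      exact ⟨hm.1, le_trans hm.2 (le_of_lt hab)⟩
  have hriff : ∀ a b, k + 1 ≤ a → a ≤ n → k + 1 ≤ b → b ≤ n → (x a < x b ↔ r a < r b) := by
    intro a b ha1 ha2 hb1 hb2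
    constructor
    · exact hrmono a b ha1 ha2 hb1 hb2
    · intro h
      rcases lt_trichotomy (x a) (x b) with h' | h' | h'
      · exact h'
      · have hab := hx ⟨by omega, ha2⟩ ⟨by omega, hb2⟩ h'
        subst hab
        omega
      · have := hrmono b a hb1 hb2 ha1 ha2 h'
        omega
  set z : ℕ → ℤ := fun i =>
    if i = k then M * (x k - 1) - 1
    else if k + 1 ≤ i ∧ i ≤ n then M * c + (r i : ℤ) else M * x i with hz
  have hzk : z k = M * (x k - 1) - 1 := by simp [hz]
  have hzpre : ∀ j, j < k → z j = M * x j := by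
    intro j hj
    simp only [hz]
    rw [if_neg (by omega), if_neg (by omega)]
  have hzblk : ∀ i, k + 1 ≤ i → i ≤ n → z i = M * c + (r i : ℤ) := by
    intro i h1 h2
    simp only [hz]
    rw [if_neg (by omega), if_pos ⟨h1, h2⟩]
  -- min at k for z
  have hzmin : ∀ j, 1 ≤ j → j ≤ n → j ≠ k → z k < z j := by
    intro j h1 h2 h3
    rw [hzk]
    rcases Nat.lt_or_ge j k with hj | hj
    · rw [hzpre j hj]
      have hxj : x k < x j := hmin j h1 h2 h3
      nlinarith
    · rw [hzblk j (by omega) h2]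
      have := hrlow j (by omega) h2
      have : (1:ℤ) ≤ (r j : ℤ) := by exact_mod_cast this
      nlinarith
  -- prefix vs block comparison
  have hpb : ∀ j i, j < k → k + 1 ≤ i → i ≤ n → (z j < z i ↔ x j ≤ c) := by
    intro j i hj hi1 hi2
    rw [hzpre j hj, hzblk i hi1 hi2]
    constructor
    · intro h
      by_contra hcon
      push_neg at hcon
      have h1 : c + 1 ≤ x j := by omega
      have h2 : M * (c + 1) ≤ M * x j := by
        exact mul_le_mul_of_nonneg_left h1 (le_of_lt hM0)
      have := hrhigh i
      nlinarith
    · intro h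
      have h2 : M * x j ≤ M * c := mul_le_mul_of_nonneg_left h (le_of_lt hM0)
      have := hrlow i hi1 hi2
      have : (1:ℤ) ≤ (r i : ℤ) := by exact_mod_cast this
      omega
  -- prefix vs prefix
  have hpp : ∀ a b, a < k → b < k → (z a < z b ↔ x a < x b) := by
    intro a b ha hb
    rw [hzpre a ha, hzpre b hb]
    exact mul_lt_mul_iff_right₀ hM0
  -- block vs block
  have hbb : ∀ a b, k + 1 ≤ a → a ≤ n → k + 1 ≤ b → b ≤ n → (z a < z b ↔ x a < x b) := by
    intro a b ha1 ha2 hb1 hb2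
    rw [hzblk a ha1 ha2, hzblk b hb1 hb2, hriff a b ha1 ha2 hb1 hb2]
    constructor
    · intro h
      have := lt_of_add_lt_add_left h
      exact_mod_cast this
    · intro h
      have h' : (r a : ℤ) < (r b : ℤ) := by exact_mod_cast h
      linarith
  -- injectivity
  have hzinj : IsSeq n z := by
    intro a ha b hb hab
    simp only [Set.mem_Icc] at ha hb
    by_contra hne
    rcases eq_or_ne a k with hak | hak
    · subst hak
      exact absurd hab (ne_of_lt (hzmin b hb.1 hb.2 (Ne.symm hne)))
    rcases eq_or_ne b k with hbk | hbk
    · subst hbk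
      exact absurd hab.symm (ne_of_lt (hzmin a ha.1 ha.2 hne))
    rcases Nat.lt_or_ge a k with hal | hal <;> rcases Nat.lt_or_ge b k with hbl | hbl
    · -- both prefix
      rw [hzpre a hal, hzpre b hbl] at hab
      have : x a = x b := mul_left_cancel₀ (ne_of_gt hM0) hab
      exact hne (hx ⟨ha.1, ha.2⟩ ⟨hb.1, hb.2⟩ this)
    · -- a prefix, b block
      have hb1 : k + 1 ≤ b := by omega
      rcases le_or_gt (x a) c with h | h
      · exact absurd hab (ne_of_lt ((hpb a b hal hb1 hb.2).2 h))
      · rw [hzpre a hal, hzblk b hb1 hb.2] at hab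
        have h1 : c + 1 ≤ x a := by omega
        have h2 : M * (c + 1) ≤ M * x a := mul_le_mul_of_nonneg_left h1 (le_of_lt hM0)
        have := hrhigh b
        nlinarith
    · -- a block, b prefix
      have ha1 : k + 1 ≤ a := by omega
      rcases le_or_gt (x b) c with h | h
      · exact absurd hab.symm (ne_of_lt ((hpb b a hbl ha1 ha.2).2 h))
      · rw [hzpre b hbl, hzblk a ha1 ha.2] at hab
        have h1 : c + 1 ≤ x b := by omega
        have h2 : M * (c + 1) ≤ M * x b := mul_le_mul_of_nonneg_left h1 (le_of_lt hM0)
        have := hrhigh a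
        nlinarith
    · -- both block
      have ha1 : k + 1 ≤ a := by omega
      have hb1 : k + 1 ≤ b := by omega
      rcases lt_trichotomy (x a) (x b) with h | h | h
      · exact absurd hab (ne_of_lt ((hbb a b ha1 ha.2 hb1 hb.2).2 h))
      · exact hne (hx ⟨ha.1, ha.2⟩ ⟨hb.1, hb.2⟩ h)
      · exact absurd hab.symm (ne_of_lt ((hbb b a hb1 hb.2 ha1 ha.2).2 h))
  -- table equality
  have hPD : ∀ i, 1 ≤ i → i ≤ n → fwdPD z i = fwdPD x i := by
    intro i hi1 hi2
    rcases Nat.lt_trichotomy i k with hik | hik | hik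
    · apply fwdPD_congr
      unfold NS
      apply Finset.filter_congr
      intro j hj
      rw [Finset.mem_Ico] at hj
      exact hpp j i (by omega) hik
    · subst hik
      rw [fwdPD_of_empty, fwdPD_of_empty]
      · rintro ⟨j, hj⟩
        rw [mem_NS] at hj
        exact absurd hj.2 (not_lt.2 (le_of_lt (hmin j hj.1.1 (by omega) (by omega))))
      · rintro ⟨j, hj⟩
        rw [mem_NS] at hj
        exact absurd hj.2 (not_lt.2 (le_of_lt (hzmin j hj.1.1 (by omega) (by omega))))
    · -- i > k
      have hkmem : k ∈ NS x i := mem_NS.2 ⟨⟨hk1, hik⟩, hmin i hi1 hi2 (by omega)⟩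
      have hne : (NS x i).Nonempty := ⟨k, hkmem⟩
      set p := (NS x i).max' hne with hp
      have hpmem : p ∈ NS x i := NS_max'_mem hne
      rw [mem_NS] at hpmem
      have hpk : k ≤ p := Finset.le_max' _ k hkmem
      have hfx : fwdPD x i = i - p := by rw [fwdPD_eq_dite, dif_pos hne]
      have hpz : p ∈ NS z i := by
        rw [mem_NS]
        refine ⟨hpmem.1, ?_⟩
        rcases eq_or_lt_of_le hpk with h | h
        · rw [← h]
          exact hzmin i hi1 hi2 (by omega)
        · exact (hbb p i (by omega) (by omega) (by omega) hi2).2 hpmem.2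
      have hmax : ∀ m ∈ NS z i, m ≤ p := by
        intro m hm
        rw [mem_NS] at hm
        by_contra hcon
        have hm1 : k + 1 ≤ m := by omega
        have : x m < x i := (hbb m i hm1 (by omega) (by omega) hi2).1 hm.2
        have : m ∈ NS x i := mem_NS.2 ⟨hm.1, this⟩
        have := Finset.le_max' _ m this
        omega
      rw [fwdPD_of_max hpz hmax, hfx]
  -- swapped value at k
  have hswk : fwdPD (swapSeq z k) k = (if j' = 0 then 0 else k - j') := by
    have hNSs : NS (swapSeq z k) k = (Finset.Ico 1 k).filter (fun j => z j < z (k + 1)) :=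
      NS_swap_at
    have hfilter : (Finset.Ico 1 k).filter (fun j => z j < z (k + 1)) =
        (Finset.Ico 1 k).filter (fun j => x j ≤ c) := by
      apply Finset.filter_congr
      intro j hj
      rw [Finset.mem_Ico] at hj
      exact hpb j (k+1) hj.2 (le_refl _) hk2
    rcases hj' with h0 | ⟨h1, h2, h3⟩
    · rw [if_pos h0]
      apply fwdPD_of_empty
      rw [hNSs, hfilter]
      rintro ⟨j, hj⟩
      rw [Finset.mem_filter, Finset.mem_Ico] at hj
      have := hmin j hj.1.1 (by omega) (by omega)
      rw [hc, if_pos h0] at hj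
      omega
    · rw [if_neg (by omega)]
      have hcj : c = x j' := by rw [hc, if_neg (by omega)]
      have hjmem : j' ∈ NS (swapSeq z k) k := by
        rw [hNSs, hfilter, Finset.mem_filter, Finset.mem_Ico]
        exact ⟨⟨h1, h2⟩, by rw [hcj]⟩
      apply fwdPD_of_max hjmem
      intro m hm
      rw [hNSs, hfilter, Finset.mem_filter, Finset.mem_Ico] at hm
      by_contra hcon
      have := h3 m (by omega) hm.1.2
      rw [hcj] at hm
      omega
  exact ⟨z, hzinj, hPD, hswk, hzmin⟩

end Construct

def Ttab (n k : ℕ) (x : ℕ → ℤ) (j' : ℕ) : Fin n → ℕ := fun p =>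
  if p.1 + 1 < k then fwdPD x (p.1 + 1)
  else if p.1 + 1 = k then (if j' = 0 then 0 else k - j')
  else if p.1 + 1 = k + 1 then 0
  else if fwdPD x (p.1 + 1) = p.1 + 1 - k then p.1 + 1 - (k + 1) else fwdPD x (p.1 + 1)

lemma swap_pdvec {n k : ℕ} {x z : ℕ → ℤ} (hz : IsSeq n z) (hk1 : 1 ≤ k) (hk2 : k + 1 ≤ n)
    (hagree : ∀ i, 1 ≤ i → i ≤ n → fwdPD z i = fwdPD x i)
    (hzmin : ∀ j, 1 ≤ j → j ≤ n → j ≠ k → z k < z j)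
    (j' : ℕ) (hswk : fwdPD (swapSeq z k) k = (if j' = 0 then 0 else k - j')) :
    PDvec n (swapSeq z k) = Ttab n k x j' := by
  funext p
  have hp := p.2
  simp only [PDvec, Ttab]
  set i := p.1 + 1 with hi
  have hi1 : 1 ≤ i := by omega
  have hin : i ≤ n := by omega
  rcases Nat.lt_trichotomy i k with h | h | h
  · rw [if_pos h, fwdPD_congr (NS_swap_lt h), hagree i hi1 hin]
  · rw [if_neg (by omega), if_pos h, h]
    exact hswk
  · rcases eq_or_ne i (k+1) with h1 | h1
    · rw [if_neg (by omega), if_neg (by omega), if_pos h1, h1]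
      exact fwdPD_swap_succ hz hk1 hk2 hzmin
    · have h2 : k + 2 ≤ i := by omega
      rw [if_neg (by omega), if_neg (by omega), if_neg h1,
        fwdPD_swap_big hz hk1 hk2 hzmin h2 hin, hagree i hi1 hin]


theorem main (n k : ℕ) (x : ℕ → ℤ) (hx : IsSeq n x)
    (hk1 : 1 ≤ k) (hk2 : k + 1 ≤ n)
    (hmin : ∀ j, 1 ≤ j → j ≤ n → j ≠ k → x k < x j) :
    (NGat n x k).ncard =
      1 + ((Finset.Ico 1 k).filter (fun j => revPD n x j = k - j)).card := by
  classical
  have hkn : k ≤ n := by omega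
  set S := (Finset.Ico 1 k).filter (fun j => revPD n x j = k - j) with hS
  have hSmem : ∀ j' ∈ S, 1 ≤ j' ∧ j' < k ∧ Vis x k j' := by
    intro j' hj'
    rw [hS, Finset.mem_filter, Finset.mem_Ico] at hj'
    exact ⟨hj'.1.1, hj'.1.2, revPD_to_vis hx hkn hj'.1.1 hj'.1.2 (by omega) hj'.2⟩
  have hset : NGat n x k = ↑((insert 0 S).image (Ttab n k x)) := by
    ext P
    constructor
    · rintro ⟨-, -, z, hzseq, hzpd, hP⟩
      have hagree : ∀ i, 1 ≤ i → i ≤ n → fwdPD z i = fwdPD x i := by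
        intro i h1 h2
        have h := congrFun hzpd ⟨i - 1, by omega⟩
        simp only [PDvec] at h
        have e : i - 1 + 1 = i := by omega
        rwa [e] at h
      have hzmin : ∀ j, 1 ≤ j → j ≤ n → j ≠ k → z k < z j :=
        min_transfer hagree hzseq hk1 hkn hmin
      set J := (Finset.Ico 1 k).filter (fun j => z j < z (k + 1)) with hJ
      rw [Finset.coe_image, Set.mem_image]
      by_cases hne : J.Nonempty
      · set j'' := J.max' hne with hj''
        have hjmJ : j'' ∈ J := Finset.max'_mem _ hne
        have hjm : (1 ≤ j'' ∧ j'' < k) ∧ z j'' < z (k + 1) := by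
          have := hjmJ
          rw [hJ, Finset.mem_filter, Finset.mem_Ico] at this
          exact this
        have hvz : Vis z k j'' := by
          intro m h1 h2
          have hmn : ¬ (z m < z (k+1)) := by
            intro hc
            have hmJ : m ∈ J := by
              rw [hJ, Finset.mem_filter, Finset.mem_Ico]
              exact ⟨⟨by omega, h2⟩, hc⟩
            exact absurd (Finset.le_max' _ m hmJ) (by omega)
          exact lt_of_lt_of_le hjm.2 (le_of_not_gt hmn)
        have hvx : Vis x k j'' :=
          (vis_transfer x z k (fun i a b => hagree i a (by omega)) j'' hjm.1.1 hjm.1.2).2 hvz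
        have hrev : revPD n x j'' = k - j'' :=
          vis_to_revPD hmin hk1 hkn hjm.1.1 hjm.1.2 hvx
        have hswk : fwdPD (swapSeq z k) k = (if j'' = 0 then 0 else k - j'') := by
          rw [if_neg (by omega)]
          apply fwdPD_of_max
          · rw [NS_swap_at]
            exact hJ ▸ hjmJ
          · intro m hm
            rw [NS_swap_at] at hm
            exact Finset.le_max' _ m (hJ ▸ hm)
        refine ⟨j'', Finset.mem_coe.2 (Finset.mem_insert.2 (Or.inr ?_)), ?_⟩
        · rw [hS, Finset.mem_filter, Finset.mem_Ico]
          exact ⟨⟨hjm.1.1, hjm.1.2⟩, hrev⟩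
        · exact ((hP.trans (swap_pdvec hzseq hk1 hk2 hagree hzmin j'' hswk)).symm)
      · have hswk : fwdPD (swapSeq z k) k = (if (0:ℕ) = 0 then 0 else k - 0) := by
          rw [if_pos rfl]
          apply fwdPD_of_empty
          rw [NS_swap_at]
          exact hJ ▸ hne
        refine ⟨0, Finset.mem_coe.2 (Finset.mem_insert_self _ _), ?_⟩
        exact ((hP.trans (swap_pdvec hzseq hk1 hk2 hagree hzmin 0 hswk)).symm)
    · intro hP
      rw [Finset.coe_image, Set.mem_image] at hP
      obtain ⟨j', hj'mem, hPT⟩ := hP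
      have hj'cases : j' = 0 ∨ (1 ≤ j' ∧ j' < k ∧ Vis x k j') := by
        rcases Finset.mem_insert.1 (Finset.mem_coe.1 hj'mem) with h | h
        · exact Or.inl h
        · exact Or.inr (hSmem j' h)
      obtain ⟨z, hzinj, hPD, hswk, hzmin⟩ := construct hx hk1 hk2 hmin j' hj'cases
      refine ⟨hk1, hk2, z, hzinj, ?_, ?_⟩
      · funext p
        have hp := p.2
        simp only [PDvec]
        exact hPD _ (by omega) (by omega)
      · exact hPT.symm.trans (swap_pdvec hzinj hk1 hk2 hPD hzmin j' hswk).symm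
  have hinj : Set.InjOn (Ttab n k x) ↑(insert 0 S) := by
    intro a ha b hb hab
    have hamem : a = 0 ∨ (1 ≤ a ∧ a < k) := by
      rcases Finset.mem_insert.1 (Finset.mem_coe.1 ha) with h | h
      · exact Or.inl h
      · exact Or.inr ⟨(hSmem a h).1, (hSmem a h).2.1⟩
    have hbmem : b = 0 ∨ (1 ≤ b ∧ b < k) := by
      rcases Finset.mem_insert.1 (Finset.mem_coe.1 hb) with h | h
      · exact Or.inl h
      · exact Or.inr ⟨(hSmem b h).1, (hSmem b h).2.1⟩
    have h := congrFun hab ⟨k - 1, by omega⟩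
    simp only [Ttab] at h
    have e : k - 1 + 1 = k := by omega
    rw [e] at h
    rw [if_neg (lt_irrefl k), if_pos rfl, if_neg (lt_irrefl k), if_pos rfl] at h
    rcases hamem with ha' | ha' <;> rcases hbmem with hb' | hb' <;>
      split_ifs at h <;> omega
  have h0S : (0:ℕ) ∉ S := by
    intro hc
    rw [hS, Finset.mem_filter, Finset.mem_Ico] at hc
    omega
  rw [hset, Set.ncard_coe_finset, Finset.card_image_of_injOn hinj,
    Finset.card_insert_of_notMem h0S, Nat.add_comm]

end St14

theorem stmt14 (n k : ℕ) (x : ℕ → ℤ) (hx : IsSeq n x)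
    (hk1 : 1 ≤ k) (hk2 : k + 1 ≤ n)
    (hmin : ∀ j, 1 ≤ j → j ≤ n → j ≠ k → x k < x j) :
    (NGat n x k).ncard =
      1 + ((Finset.Ico 1 k).filter (fun j => revPD n x j = k - j)).card := St14.main n k x hx hk1 hk2 hmin
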